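/- Let p be an odd prime and let Q_p = U(p)^2 = {x^2 : x ∈ U(p)} be the set of nonzero quadratic residues modulo p. Then C_{Q_p}(p) = 3; that is: (i) every sequence (x, y, z) of length 3 in Z_p has a nonempty subsequence of consecutive terms which is a Q_p-weighted zero-sum sequence; and (ii) there exists a sequence of length 2 in Z_p having no nonempty subsequence of consecutive terms which is a Q_p-weighted zero-sum sequence. -/

import Mathlib

section Aux
variable {p : ℕ} [Fact p.Prime]

lemma nonsq_mul {a b : ZMod p} (ha : a ≠ 0) (hb : b ≠ 0)
    (hsa : ¬ IsSquare a) (hsb : ¬ IsSquare b) : IsSquare (a * b) := by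
  refine (quadraticChar_one_iff_isSquare (mul_ne_zero ha hb)).mp ?_
  rw [map_mul, quadraticChar_neg_one_iff_not_isSquare.mpr hsa,
    quadraticChar_neg_one_iff_not_isSquare.mpr hsb]
  ring

lemma mem_Q_iff {x : ZMod p} :
    x ∈ {x : ZMod p | ∃ u : (ZMod p)ˣ, (u : ZMod p) ^ 2 = x} ↔ IsSquare x ∧ x ≠ 0 := by
  constructor
  · rintro ⟨u, rfl⟩
    exact ⟨⟨u, by ring⟩, pow_ne_zero _ u.ne_zero⟩
  · rintro ⟨⟨r, rfl⟩, hx⟩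
    have hr : r ≠ 0 := fun h => hx (by simp [h])
    exact ⟨Units.mk0 r hr, by simp [sq]⟩

lemma exists_sq_add_one (hp2 : ringChar (ZMod p) ≠ 2) :
    ∃ s : ZMod p, IsSquare s ∧ s ≠ 0 ∧ ¬ IsSquare (s + 1) := by
  classical
  obtain ⟨g, hg⟩ := FiniteField.exists_nonsquare hp2
  have hex : ∃ n : ℕ, ¬ IsSquare ((n : ZMod p)) := ⟨g.val, by
    rwa [ZMod.natCast_val, ZMod.cast_id]⟩
  set m := Nat.find hex with hm
  have hspec : ¬ IsSquare ((m : ZMod p)) := Nat.find_spec hex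
  have hmin : ∀ k < m, IsSquare ((k : ZMod p)) := fun k hk => by
    by_contra h; exact Nat.lt_irrefl _ (lt_of_le_of_lt (Nat.find_min' hex h) hk)
  have h0 : m ≠ 0 := fun h => hspec (by rw [h]; exact ⟨0, by simp⟩)
  have h1 : m ≠ 1 := fun h => hspec (by rw [h]; exact ⟨1, by simp⟩)
  have hle : m ≤ g.val := Nat.find_min' hex (by rwa [ZMod.natCast_val, ZMod.cast_id])
  have hlt : m < p := lt_of_le_of_lt hle (ZMod.val_lt g)
  refine ⟨((m - 1 : ℕ) : ZMod p), hmin _ (by omega), ?_, ?_⟩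
  · intro h
    rw [ZMod.natCast_eq_zero_iff] at h
    have := Nat.le_of_dvd (by omega) h
    omega
  · have : ((m - 1 : ℕ) : ZMod p) + 1 = ((m : ℕ) : ZMod p) := by
      rw [show (m : ℕ) = (m - 1) + 1 from by omega]; push_cast; ring
    rwa [this]

end Aux


/-- A list `L` over `ZMod n` is an `A`-weighted zero-sum sequence if there are weights
`a₁, …, a_k ∈ A` (one per term) with `a₁x₁ + ⋯ + a_kx_k = 0`. -/
def IsWeightedZeroSum {n : ℕ} (A : Set (ZMod n)) (L : List (ZMod n)) : Prop :=
  ∃ a : List (ZMod n), a.length = L.length ∧ (∀ w ∈ a, w ∈ A) ∧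
    (List.zipWith (· * ·) a L).sum = 0

/-- `L` has a nonempty subsequence of consecutive terms which is an
`A`-weighted zero-sum sequence. -/
def HasConsecWZS {n : ℕ} (A : Set (ZMod n)) (L : List (ZMod n)) : Prop :=
  ∃ l₁ l₂ l₃ : List (ZMod n), L = l₁ ++ l₂ ++ l₃ ∧ l₂ ≠ [] ∧ IsWeightedZeroSum A l₂

/-- `L` has a nonempty subsequence (not necessarily of consecutive terms) which is an
`A`-weighted zero-sum sequence. -/
def HasSubWZS {n : ℕ} (A : Set (ZMod n)) (L : List (ZMod n)) : Prop :=
  ∃ l : List (ZMod n), l.Sublist L ∧ l ≠ [] ∧ IsWeightedZeroSum A l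

/-- For an odd prime `p` and `Q_p = U(p)²` the nonzero quadratic residues
mod `p`, we have `C_{Q_p}(p) = 3`. -/
theorem C_of_squares_prime (p : ℕ) (hp : p.Prime) (hodd : p ≠ 2) :
    (∀ L : List (ZMod p), L.length = 3 →
      HasConsecWZS {x : ZMod p | ∃ u : (ZMod p)ˣ, (u : ZMod p) ^ 2 = x} L) ∧
    (∃ L : List (ZMod p), L.length = 2 ∧
      ¬ HasConsecWZS {x : ZMod p | ∃ u : (ZMod p)ˣ, (u : ZMod p) ^ 2 = x} L) := by
  haveI : Fact p.Prime := ⟨hp⟩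
  set Q := {x : ZMod p | ∃ u : (ZMod p)ˣ, (u : ZMod p) ^ 2 = x} with hQ
  have hp2 : ringChar (ZMod p) ≠ 2 := by rw [ZMod.ringChar_zmod_n]; exact hodd
  have hone : (1 : ZMod p) ∈ Q := mem_Q_iff.mpr ⟨IsSquare.one, one_ne_zero⟩
  constructor
  · intro L hL
    match L, hL with
    | [x, y, z], _ =>
    by_cases hx : x = 0
    · exact ⟨[], [x], [y, z], by simp, by simp, [1], rfl, by simpa using hone,
        by simp [hx]⟩
    by_cases hy : y = 0
    · exact ⟨[x], [y], [z], by simp, by simp, [1], rfl, by simpa using hone,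
        by simp [hy]⟩
    by_cases hz : z = 0
    · exact ⟨[x, y], [z], [], by simp, by simp, [1], rfl, by simpa using hone,
        by simp [hz]⟩
    by_cases hxy : IsSquare (-(x * y⁻¹))
    · refine ⟨[], [x, y], [z], by simp, by simp, [1, -(x * y⁻¹)], rfl, ?_, ?_⟩
      · intro w hw
        simp only [List.mem_cons, List.not_mem_nil, or_false] at hw
        rcases hw with rfl | rfl
        · exact hone
        · exact mem_Q_iff.mpr ⟨hxy, by
            simp [neg_eq_zero, mul_eq_zero, hx, inv_eq_zero, hy]⟩
      · have : (1 : ZMod p) * x + (-(x * y⁻¹)) * y = 0 := by field_simp; ring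
        simpa using this
    by_cases hyz : IsSquare (-(y * z⁻¹))
    · refine ⟨[x], [y, z], [], by simp, by simp, [1, -(y * z⁻¹)], rfl, ?_, ?_⟩
      · intro w hw
        simp only [List.mem_cons, List.not_mem_nil, or_false] at hw
        rcases hw with rfl | rfl
        · exact hone
        · exact mem_Q_iff.mpr ⟨hyz, by
            simp [neg_eq_zero, mul_eq_zero, hy, inv_eq_zero, hz]⟩
      · have : (1 : ZMod p) * y + (-(y * z⁻¹)) * z = 0 := by field_simp; ring
        simpa using this
    · -- triple case
      obtain ⟨s, hs, hs0, hsn⟩ := exists_sq_add_one hp2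
      have hxy0 : -(x * y⁻¹) ≠ 0 := by
        simp [neg_eq_zero, mul_eq_zero, hx, inv_eq_zero, hy]
      have hyz0 : -(y * z⁻¹) ≠ 0 := by
        simp [neg_eq_zero, mul_eq_zero, hy, inv_eq_zero, hz]
      have hxz : IsSquare (x * z⁻¹) := by
        have := nonsq_mul hxy0 hyz0 hxy hyz
        have heq : -(x * y⁻¹) * -(y * z⁻¹) = x * z⁻¹ := by field_simp
        rwa [heq] at this
      have hzx : IsSquare (z * x⁻¹) := by
        have := hxz.inv
        rwa [mul_inv_rev, inv_inv] at this
      have hzy_ns : ¬ IsSquare (-(z * y⁻¹)) := by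
        intro h
        apply hyz
        have := h.inv
        rwa [show (-(z * y⁻¹))⁻¹ = -(y * z⁻¹) by
          rw [inv_neg, mul_inv_rev, inv_inv, mul_comm]] at this
      have hzy0 : -(z * y⁻¹) ≠ 0 := by
        simp [neg_eq_zero, mul_eq_zero, hz, inv_eq_zero, hy]
      have hs1 : (s + 1) ≠ 0 := fun h => hsn (by rw [h]; exact ⟨0, by ring⟩)
      refine ⟨[], [x, y, z], [], by simp, by simp,
        [s * (z * x⁻¹), (s + 1) * (-(z * y⁻¹)), 1], rfl, ?_, ?_⟩
      · intro w hw
        simp only [List.mem_cons, List.not_mem_nil, or_false] at hw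
        rcases hw with rfl | rfl | rfl
        · exact mem_Q_iff.mpr ⟨hs.mul hzx,
            mul_ne_zero hs0 (mul_ne_zero hz (inv_ne_zero hx))⟩
        · exact mem_Q_iff.mpr ⟨nonsq_mul hs1 hzy0 hsn hzy_ns, mul_ne_zero hs1 hzy0⟩
        · exact hone
      · have h : s * (z * x⁻¹) * x + (s + 1) * (-(z * y⁻¹)) * y + 1 * z = 0 := by
          field_simp; ring
        simp only [List.zipWith_cons_cons, List.zipWith_nil_right, List.sum_cons,
          List.sum_nil, add_zero]
        linear_combination h
  · obtain ⟨g, hg⟩ := FiniteField.exists_nonsquare hp2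
    have hg0 : g ≠ 0 := fun h => hg (by rw [h]; exact ⟨0, by ring⟩)
    refine ⟨[1, -g], rfl, ?_⟩
    rintro ⟨l₁, l₂, l₃, hL, hne, a, hlen, hmem, hsum⟩
    have hcase : l₂ = [1] ∨ l₂ = [-g] ∨ l₂ = [(1 : ZMod p), -g] := by
      rcases l₁ with _ | ⟨u, l₁⟩
      · rcases l₂ with _ | ⟨b, l₂⟩
        · exact absurd rfl hne
        · rcases l₂ with _ | ⟨c, l₂⟩
          · simp only [List.nil_append, List.cons_append] at hL
            injection hL with hb _
            exact Or.inl (by rw [← hb])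
          · simp only [List.nil_append, List.cons_append] at hL
            injection hL with hb hL'
            injection hL' with hc hL''
            obtain ⟨h2, _⟩ := List.append_eq_nil_iff.mp hL''.symm
            right; right; rw [← hb, ← hc, h2]
      · rcases l₁ with _ | ⟨v, l₁⟩
        · simp only [List.cons_append, List.nil_append] at hL
          injection hL with hu hL'
          rcases l₂ with _ | ⟨b, l₂⟩
          · exact absurd rfl hne
          · simp only [List.cons_append] at hL'
            injection hL' with hb hL''
            obtain ⟨h2, _⟩ := List.append_eq_nil_iff.mp hL''.symm
            right; left; rw [← hb, h2]
        · exfalso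
          simp only [List.cons_append] at hL
          injection hL with _ hL'
          injection hL' with _ hL''
          have h2 := List.append_eq_nil_iff.mp (List.append_eq_nil_iff.mp hL''.symm).1
          exact hne h2.2
    rcases hcase with h2 | h2 | h2 <;> subst h2
    · rcases a with _ | ⟨w, a⟩
      · simp at hlen
      · rcases a with _ | ⟨w2, a⟩
        · simp at hsum
          obtain ⟨_, hw0⟩ := mem_Q_iff.mp (hmem w (by simp))
          exact hw0 hsum
        · simp at hlen
    · rcases a with _ | ⟨w, a⟩
      · simp at hlen
      · rcases a with _ | ⟨w2, a⟩
        · simp at hsum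
          obtain ⟨_, hw0⟩ := mem_Q_iff.mp (hmem w (by simp))
          rcases hsum with h | h
          · exact hw0 h
          · exact hg0 h
        · simp at hlen
    · rcases a with _ | ⟨w1, a⟩
      · simp at hlen
      · rcases a with _ | ⟨w2, a⟩
        · simp at hlen
        · rcases a with _ | ⟨w3, a⟩
          · simp at hsum
            obtain ⟨hw1s, hw10⟩ := mem_Q_iff.mp (hmem w1 (by simp))
            obtain ⟨hw2s, hw20⟩ := mem_Q_iff.mp (hmem w2 (by simp))
            apply hg
            have hw : w1 = w2 * g := by linear_combination hsum
            have hgeq : g = w1 * w2⁻¹ := by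
              rw [hw, mul_comm w2 g, mul_assoc, mul_inv_cancel₀ hw20, mul_one]
            rw [hgeq]
            exact hw1s.mul hw2s.inv
          · simp at hlen
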